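/- Let X be an alphabet having n ≥ 2 letters and let g: X* → X* be a primitive morphism. Then for every letter x ∈ X, |g^n(x)| ≥ M_g. -/

import Mathlib

open Filter Set

variable {X : Type*}

/-- Apply the morphism with letter images `g` to a word. -/
def applyM (g : X → List X) (w : List X) : List X := w.flatMap g

/-- `iterM g k w` is `g^k(w)`. -/
def iterM (g : X → List X) (k : ℕ) (w : List X) : List X := (applyM g)^[k] w

/-- The letter map of the composition `g ∘ h` (first `h`, then `g`). -/
def compM (g h : X → List X) : X → List X := fun a => applyM g (h a)

/-- The letter map of the power `g^k`. -/
def powM (g : X → List X) (k : ℕ) : X → List X := fun a => iterM g k [a]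

/-- A morphism is primitive if some power maps every letter to a word containing every letter. -/
def Primitive (g : X → List X) : Prop := ∃ k : ℕ, 0 < k ∧ ∀ a b : X, a ∈ iterM g k [b]

/-- `Mg g` is the maximal length of the image of a letter. -/
def Mg [Fintype X] (g : X → List X) : ℕ := Finset.univ.sup fun x => (g x).length

/-- A morphism is growing if the lengths of iterated images of every letter tend to infinity. -/
def Growing (g : X → List X) : Prop :=
  ∀ x : X, Tendsto (fun i => (iterM g i [x]).length) atTop atTop

/-- `w` is a (finite) prefix of the infinite word `s`. -/
def IsPrefI (w : List X) (s : ℕ → X) : Prop := ∀ i (h : i < w.length), w[i]'h = s i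

/-- `v` is a factor of the infinite word `s`. -/
def IsFactorI (v : List X) (s : ℕ → X) : Prop :=
  ∃ j : ℕ, ∀ i (h : i < v.length), v[i]'h = s (j + i)

/-- `g^ω(x)` exists. -/
def OmegaExists (g : X → List X) (x : X) : Prop :=
  [x] <+: g x ∧ Tendsto (fun i => (iterM g i [x]).length) atTop atTop

/-- `s = g^ω(x)`. -/
def IsOmega (g : X → List X) (x : X) (s : ℕ → X) : Prop :=
  OmegaExists g x ∧ ∀ i : ℕ, IsPrefI (iterM g i [x]) s

/-- `s = u^ω` for the nonempty word `u`. -/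
def IsPeriodicWord (s : ℕ → X) (u : List X) : Prop :=
  u ≠ [] ∧ ∀ (i : ℕ) (h : i % u.length < u.length), s i = u[i % u.length]'h

/-- A morphism is looping. -/
def Looping (g : X → List X) : Prop :=
  ∃ k : ℕ, 0 < k ∧ ∃ x : X, ∃ u : List X, ∃ s : ℕ → X,
    IsOmega (powM g k) x s ∧ IsPeriodicWord s u

/-- A morphism is loop-free if it is not looping. -/
def LoopFree (g : X → List X) : Prop := ¬ Looping g

/-- `p` is a period of `u`. -/
def HasPeriod (u : List X) (p : ℕ) : Prop :=
  0 < p ∧ ∀ i : ℕ, i + p < u.length → u[i + p]? = u[i]?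

/-- The smallest period of `u`. -/
noncomputable def PER (u : List X) : ℕ := sInf {p | HasPeriod u p}

/-- A primitive word: nonempty and not a proper power of a shorter word. -/
def PrimitiveWord (u : List X) : Prop :=
  u ≠ [] ∧ ¬∃ (v : List X) (j : ℕ), 2 ≤ j ∧ v.length < u.length ∧
    u = (List.replicate j v).flatten

/-- `COMP g h` : the set of words whose images under `g` and `h` are prefix-comparable. -/
def COMP (g h : X → List X) : Set (List X) :=
  {w | ∃ u₁ u₂ : List X, applyM g w ++ u₁ = applyM h w ++ u₂}

/-- `BAL g h`. -/
noncomputable def BAL (g h : X → List X) : ℕ∞ :=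
  ⨆ (x : X) (k : ℕ),
    ((((applyM g (iterM g k [x])).length : ℤ) -
      ((applyM h (iterM g k [x])).length : ℤ)).natAbs : ℕ∞)

/-- The set of factors of length `q` of the word `w`. -/
def Fq (q : ℕ) (w : List X) : Set (List X) := {v | v.length = q ∧ v <:+: w}

/-- The set of factors of length `q` of words of `L`. -/
def FqL (q : ℕ) (L : Set (List X)) : Set (List X) := ⋃ w ∈ L, Fq q w

/-- `A n = ⌊9 n³ √(n log n)⌋`. -/
noncomputable def Abound (n : ℕ) : ℕ := ⌊9 * (n : ℝ)^3 * Real.sqrt (n * Real.log n)⌋₊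
section AuxPrim

lemma iterM_succ_inner (g : X → List X) (m : ℕ) (w : List X) :
    iterM g (m+1) w = iterM g m (applyM g w) := Function.iterate_succ_apply _ _ _

lemma iterM_succ_outer (g : X → List X) (m : ℕ) (w : List X) :
    iterM g (m+1) w = applyM g (iterM g m w) := Function.iterate_succ_apply' _ _ _

lemma iterM_add' (g : X → List X) (i j : ℕ) (w : List X) :
    iterM g (i+j) w = iterM g i (iterM g j w) := Function.iterate_add_apply _ _ _ _

lemma iterM_nil (g : X → List X) (m : ℕ) : iterM g m ([] : List X) = [] := by
  induction m with
  | zero => rfl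
  | succ m ih => rw [iterM_succ_inner]; exact ih

lemma mem_iterM_iff' (g : X → List X) (m : ℕ) (w : List X) (c : X) :
    c ∈ iterM g m w ↔ ∃ b ∈ w, c ∈ iterM g m [b] := by
  induction m generalizing w with
  | zero => simp [iterM]
  | succ m ih =>
    rw [iterM_succ_inner, ih]
    constructor
    · rintro ⟨a, ha, hc⟩
      rw [applyM, List.mem_flatMap] at ha
      obtain ⟨b, hb, hab⟩ := ha
      refine ⟨b, hb, ?_⟩
      rw [iterM_succ_inner, ih]
      exact ⟨a, by simpa [applyM] using hab, hc⟩
    · rintro ⟨b, hb, hc⟩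
      rw [iterM_succ_inner, ih] at hc
      obtain ⟨a, ha, hc⟩ := hc
      refine ⟨a, ?_, hc⟩
      rw [applyM, List.mem_flatMap]
      exact ⟨b, hb, by simpa [applyM] using ha⟩

lemma length_le_applyM (g : X → List X) (hne : ∀ a, g a ≠ []) (w : List X) :
    w.length ≤ (applyM g w).length := by
  induction w with
  | nil => simp [applyM]
  | cons a w ih =>
    have h1 : 1 ≤ (g a).length := List.length_pos_iff.mpr (hne a)
    simp only [applyM, List.flatMap_cons, List.length_append, List.length_cons] at *
    omega

lemma length_iterM_mono (g : X → List X) (hne : ∀ a, g a ≠ []) (w : List X)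
    {m m' : ℕ} (h : m ≤ m') : (iterM g m w).length ≤ (iterM g m' w).length := by
  induction m' with
  | zero => simp [Nat.le_zero.mp h]
  | succ m' ih =>
    rcases Nat.lt_or_ge m (m'+1) with h' | h'
    · have := ih (by omega)
      rw [iterM_succ_outer]
      exact this.trans (length_le_applyM g hne _)
    · have : m = m' + 1 := by omega
      simp [this]

lemma single_length_le (g : X → List X) {b : X} {w : List X} (hb : b ∈ w) :
    (g b).length ≤ (applyM g w).length := by
  induction w with
  | nil => simp at hb
  | cons a w ih =>
    simp only [applyM, List.flatMap_cons, List.length_append]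
    rcases List.mem_cons.mp hb with rfl | hb
    · omega
    · have := ih hb
      simp only [applyM] at this
      omega

lemma exists_short (g : X → List X) [Fintype X] {y x : X} {k : ℕ}
    (h : y ∈ iterM g k [x]) : ∃ m < Fintype.card X, y ∈ iterM g m [x] := by
  have hcard : 0 < Fintype.card X := Fintype.card_pos_iff.mpr ⟨x⟩
  induction k using Nat.strong_induction_on generalizing x with
  | _ k ih =>
    by_cases hk : k < Fintype.card X
    · exact ⟨k, hk, h⟩
    · push_neg at hk
      have hchoice : ∀ i : Fin (k+1), ∃ b : X,
          b ∈ iterM g (k - i) [x] ∧ y ∈ iterM g i [b] := by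
        intro i
        have hik : (i : ℕ) + (k - i) = k := by omega
        have h' := h
        rw [← hik, iterM_add', mem_iterM_iff'] at h'
        obtain ⟨b, hb, hyb⟩ := h'
        exact ⟨b, hb, hyb⟩
      choose b hb1 hb2 using hchoice
      obtain ⟨i, j, hij, heq⟩ := Fintype.exists_ne_map_eq_of_card_lt b
        (by simp; omega)
      have key : ∀ i j : Fin (k+1), (i : ℕ) < j → b i = b j →
          ∃ m < Fintype.card X, y ∈ iterM g m [x] := by
        intro i j hlt hbeq
        have hy' : y ∈ iterM g ((i : ℕ) + (k - j)) [x] := by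
          rw [iterM_add', mem_iterM_iff']
          exact ⟨b j, hb1 j, hbeq ▸ hb2 i⟩
        have hlt' : (i : ℕ) + (k - j) < k := by
          have := j.isLt; omega
        exact ih _ hlt' hy'
      rcases (Fin.val_ne_iff.mpr hij).lt_or_gt with h' | h'
      · exact key i j h' heq
      · exact key j i h' heq.symm

lemma g_ne_nil (g : X → List X) (hg : Primitive g) : ∀ a, g a ≠ [] := by
  intro a hga
  obtain ⟨k, hk, hall⟩ := hg
  obtain ⟨k', rfl⟩ : ∃ k', k = k' + 1 := ⟨k - 1, by omega⟩
  have := hall a a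
  rw [iterM_succ_inner] at this
  have hap : applyM g [a] = [] := by simp [applyM, hga]
  rw [hap, iterM_nil] at this
  exact (List.not_mem_nil (a := a)) this

end AuxPrim

/-- If `X` has `n ≥ 2` letters and `g` is primitive, then
`|g^n(x)| ≥ M_g` for every letter `x`. -/
theorem primitive_iter_card_length_ge {X : Type*} [Fintype X]
    (n : ℕ) (hn : n = Fintype.card X) (hn2 : 2 ≤ n)
    (g : X → List X) (hg : Primitive g) :
    ∀ x : X, Mg g ≤ (iterM g n [x]).length := by
  intro x
  have hne := g_ne_nil g hg
  obtain ⟨k, hk, hall⟩ := hg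
  obtain ⟨y, -, hy⟩ := Finset.exists_mem_eq_sup (Finset.univ : Finset X)
    (Finset.univ_nonempty_iff.mpr ⟨x⟩) (fun z => (g z).length)
  obtain ⟨m, hm, hmy⟩ := exists_short g (hall y x)
  have h1 : (g y).length ≤ (iterM g (m+1) [x]).length := by
    rw [iterM_succ_outer]
    exact single_length_le g hmy
  have h2 : (iterM g (m+1) [x]).length ≤ (iterM g n [x]).length :=
    length_iterM_mono g hne _ (by omega)
  calc Mg g = (g y).length := hy
  _ ≤ _ := h1.trans h2
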